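/- Let (A,B) be a bipartition of the vertex set of a finite simple graph G such that the graph G_AB of edges between A and B is a forest (contains no cycles), |A| ≤ |B|, and A contains at most one vertex of degree 1 in G_AB. If moreover every vertex of A has degree at least 1 in G_AB, then the matrix Γ_AB over F2 has full column rank |A|. -/

import Mathlib

open scoped Classical

/-- The biadjacency matrix `Γ_AB` over `F₂`. -/
noncomputable def gammaAB {V : Type*} [Fintype V] [DecidableEq V]
    (G : SimpleGraph V) (A : Finset V) : Matrix ↥(Aᶜ) ↥A (ZMod 2) :=
  fun b a => if G.Adj (a : V) (b : V) then 1 else 0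

/-- The graph `G_AB` keeping only the edges of `G` between `A` and `B = Aᶜ`. -/
def bipartiteSub {V : Type*} [Fintype V] [DecidableEq V]
    (G : SimpleGraph V) (A : Finset V) : SimpleGraph V where
  Adj u v := G.Adj u v ∧ ((u ∈ A ∧ v ∈ Aᶜ) ∨ (u ∈ Aᶜ ∧ v ∈ A))
  symm := by
    constructor
    intro u v h
    exact ⟨h.1.symm, h.2.symm.imp And.symm And.symm⟩
  loopless := ⟨fun v h => G.irrefl h.1⟩

section Aux

open SimpleGraph Finset

set_option linter.unusedSectionVars false

variable {V : Type*} [Fintype V] [DecidableEq V]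

lemma isAcyclic_mono' {H H' : SimpleGraph V} (hle : H' ≤ H) (hac : H.IsAcyclic) : H'.IsAcyclic :=
  fun _ c hc => hac (c.mapLe hle) (hc.mapLe hle)

lemma exists_degree_one (H : SimpleGraph V) (hac : H.IsAcyclic)
    {x y : V} (hxy : H.Adj x y) : ∃ v, H.degree v = 1 := by
  classical
  obtain ⟨P, -, hPmax⟩ := Finset.exists_max_image (Finset.univ : Finset (Σ w : V, Σ u : V, H.Path w u))
    (fun t => (t.2.2 : H.Walk t.1 t.2.1).length) ⟨⟨x, y, ⟨Walk.cons hxy Walk.nil, by simp [hxy.ne]⟩⟩, Finset.mem_univ _⟩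
  obtain ⟨w, u, p⟩ := P
  have hp : (p : H.Walk w u).IsPath := p.2
  have hlen : 1 ≤ (p : H.Walk w u).length := by
    have h1 := hPmax ⟨x, y, ⟨Walk.cons hxy Walk.nil, by simp [hxy.ne]⟩⟩ (Finset.mem_univ _)
    simpa using h1
  use w
  have hnbr : H.neighborFinset w = {(p : H.Walk w u).getVert 1} := by
    ext z
    simp only [mem_neighborFinset, Finset.mem_singleton]
    constructor
    · intro hz
      by_cases hzs : z ∈ (p : H.Walk w u).support
      · have hr : ((p : H.Walk w u).takeUntil z hzs).IsPath := hp.takeUntil hzs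
        have he : (Walk.cons hz (Walk.nil : H.Walk z z)).IsPath := by simp [hz.ne]
        have := hac.path_unique ⟨(p : H.Walk w u).takeUntil z hzs, hr⟩ ⟨Walk.cons hz Walk.nil, he⟩
        have heq : (p : H.Walk w u).takeUntil z hzs = Walk.cons hz Walk.nil := by
          exact congrArg Subtype.val this
        have hspec := (p : H.Walk w u).take_spec hzs
        rw [heq] at hspec
        have h2 := congrArg (fun q => Walk.getVert q 1) hspec
        simpa [Walk.cons_append, Walk.getVert_cons_succ] using h2
      · exfalso
        have hq : (Walk.cons hz.symm (p : H.Walk w u)).IsPath :=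
          (Walk.cons_isPath_iff _ _).2 ⟨hp, hzs⟩
        have := hPmax ⟨z, u, ⟨Walk.cons hz.symm (p : H.Walk w u), hq⟩⟩ (Finset.mem_univ _)
        simp at this
    · rintro rfl
      have := (p : H.Walk w u).adj_getVert_succ (i := 0) (by omega)
      simpa using this
  rw [SimpleGraph.degree, hnbr, Finset.card_singleton]

lemma forest_bound : ∀ (n : ℕ) (H : SimpleGraph V) [Fintype H.edgeSet] [Fintype H.support], H.IsAcyclic → H.edgeFinset.Nonempty →
    H.edgeFinset.card = n → H.edgeFinset.card + 1 ≤ H.support.toFinset.card := by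
  intro n
  induction n using Nat.strong_induction_on with
  | _ n ih =>
    intro H instE instS hac hne hcard
    have hnpos : 1 ≤ n := hcard ▸ Finset.card_pos.mpr hne
    have hleafex : ∃ v, H.degree v = 1 := by
      obtain ⟨e, he⟩ := hne
      revert he
      refine Sym2.ind (fun x y he => ?_) e
      exact exists_degree_one H hac (mem_edgeFinset.mp he)
    obtain ⟨v, hv⟩ := hleafex
    obtain ⟨u, hu⟩ := Finset.card_eq_one.mp (by rwa [SimpleGraph.degree] at hv)
    have huadj : H.Adj v u := by
      rw [← mem_neighborFinset, hu]; exact Finset.mem_singleton_self u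
    have hedge : (H.deleteEdges {s(v, u)}).edgeFinset = H.edgeFinset.erase s(v, u) := by
      ext e
      simp only [mem_edgeFinset, Finset.mem_erase, SimpleGraph.edgeSet_deleteEdges,
        Set.mem_diff, Set.mem_singleton_iff]
      tauto
    have hmem : s(v, u) ∈ H.edgeFinset := by rw [mem_edgeFinset]; exact huadj
    have hcard' : (H.deleteEdges {s(v, u)}).edgeFinset.card = n - 1 := by
      rw [hedge, Finset.card_erase_of_mem hmem, hcard]
    have hvsupp : v ∈ H.support.toFinset := by
      rw [Set.mem_toFinset, SimpleGraph.mem_support]; exact ⟨u, huadj⟩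
    have hH'ac : (H.deleteEdges {s(v, u)}).IsAcyclic :=
      isAcyclic_mono' (SimpleGraph.deleteEdges_le _) hac
    have hsupp : (H.deleteEdges {s(v, u)}).support.toFinset ⊆ H.support.toFinset.erase v := by
      intro x hx
      rw [Set.mem_toFinset, SimpleGraph.mem_support] at hx
      obtain ⟨w, hw⟩ := hx
      rw [SimpleGraph.deleteEdges_adj] at hw
      rw [Finset.mem_erase, Set.mem_toFinset, SimpleGraph.mem_support]
      refine ⟨?_, ⟨w, hw.1⟩⟩
      intro hxv
      subst hxv
      have h5 : w ∈ H.neighborFinset x := (SimpleGraph.mem_neighborFinset _ _ _).mpr hw.1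
      rw [hu, Finset.mem_singleton] at h5
      subst h5
      exact hw.2 rfl
    by_cases hne' : (H.deleteEdges {s(v, u)}).edgeFinset.Nonempty
    · have h1 := ih (n - 1) (by omega) _ hH'ac hne' hcard'
      have h2 : (H.deleteEdges {s(v, u)}).edgeFinset.card + 1 ≤ H.support.toFinset.card - 1 := by
        calc (H.deleteEdges {s(v, u)}).edgeFinset.card + 1
            ≤ (H.deleteEdges {s(v, u)}).support.toFinset.card := h1
        _ ≤ (H.support.toFinset.erase v).card := Finset.card_le_card hsupp
        _ = H.support.toFinset.card - 1 := Finset.card_erase_of_mem hvsupp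
      have h3 : 1 ≤ H.support.toFinset.card := Finset.card_pos.mpr ⟨v, hvsupp⟩
      omega
    · rw [Finset.not_nonempty_iff_eq_empty, hedge] at hne'
      have h1 : H.edgeFinset.card = 1 := by
        have h6 := Finset.card_erase_of_mem hmem
        rw [hne'] at h6
        simp only [Finset.card_empty] at h6
        omega
      have husupp : u ∈ H.support.toFinset := by
        rw [Set.mem_toFinset, SimpleGraph.mem_support]; exact ⟨v, huadj.symm⟩
      have h2 : 2 ≤ H.support.toFinset.card := by
        have hsub : ({v, u} : Finset V) ⊆ H.support.toFinset := by
          intro z hz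
          rcases Finset.mem_insert.mp hz with rfl | hz
          · exact hvsupp
          · rw [Finset.mem_singleton] at hz; subst hz; exact husupp
        have hcard2 : ({v, u} : Finset V).card = 2 := by
          rw [Finset.card_insert_of_notMem (by simp [huadj.ne]), Finset.card_singleton]
        calc 2 = ({v, u} : Finset V).card := hcard2.symm
        _ ≤ _ := Finset.card_le_card hsub
      omega


theorem kernel_trivial (G : SimpleGraph V) (A : Finset V)
    (hforest : (bipartiteSub G A).IsAcyclic)
    (hleaf : {a : V | a ∈ A ∧ ((bipartiteSub G A).neighborSet a).ncard = 1}.ncard ≤ 1)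
    (hdeg : ∀ a ∈ A, ((bipartiteSub G A).neighborSet a).Nonempty)
    (v : ↥A → ZMod 2) (hv : (gammaAB G A).mulVecLin v = 0) : v = 0 := by
  classical
  by_contra hvne
  obtain ⟨a0, ha0⟩ := Function.ne_iff.mp hvne
  set S : Finset V := (A.attach.filter (fun a => v a ≠ 0)).image Subtype.val with hSdef
  have hmemS : ∀ a : ↥A, ((a : V) ∈ S ↔ v a ≠ 0) := by
    intro a
    rw [hSdef, Finset.mem_image]
    simp only [Finset.mem_filter, Finset.mem_attach, true_and]
    exact ⟨fun ⟨b, hb, hba⟩ => by obtain rfl := Subtype.ext hba; exact hb, fun h => ⟨a, h, rfl⟩⟩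
  have hSA : ∀ x ∈ S, x ∈ A := by
    intro x hx
    rw [hSdef, Finset.mem_image] at hx
    obtain ⟨a, -, rfl⟩ := hx
    exact a.2
  set H : SimpleGraph V :=
    { Adj := fun x y => (bipartiteSub G A).Adj x y ∧ (x ∈ S ∨ y ∈ S)
      symm := by constructor; intro x y h; exact ⟨h.1.symm, h.2.symm⟩
      loopless := ⟨fun x h => (bipartiteSub G A).irrefl h.1⟩ } with hHdef
  have hHadj : ∀ x y : V, (H.Adj x y ↔ (bipartiteSub G A).Adj x y ∧ (x ∈ S ∨ y ∈ S)) :=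
    fun _ _ => Iff.rfl
  have hHle : H ≤ bipartiteSub G A := fun x y h => h.1
  have hHac : H.IsAcyclic := isAcyclic_mono' hHle hforest
  have hnbrS : ∀ a ∈ S, H.neighborFinset a = (bipartiteSub G A).neighborFinset a := by
    intro a ha
    ext y
    rw [mem_neighborFinset, mem_neighborFinset, hHadj]
    exact ⟨fun h => h.1, fun h => ⟨h, Or.inl ha⟩⟩
  have hnbrB : ∀ b, b ∉ A → H.neighborFinset b = S.filter (fun y => G.Adj b y) := by
    intro b hb
    ext y
    rw [mem_neighborFinset, Finset.mem_filter, hHadj]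
    constructor
    · rintro ⟨hbip, hS⟩
      have hyS : y ∈ S := hS.resolve_left (fun h => hb (hSA _ h))
      exact ⟨hyS, hbip.1⟩
    · rintro ⟨hyS, hadj⟩
      exact ⟨⟨hadj, Or.inr ⟨Finset.mem_compl.mpr hb, hSA _ hyS⟩⟩, Or.inr hyS⟩
  have hnbrA0 : ∀ a ∈ A, a ∉ S → H.neighborFinset a = ∅ := by
    intro a ha haS
    ext y
    rw [mem_neighborFinset, hHadj]
    simp only [Finset.notMem_empty, iff_false]
    rintro ⟨hbip, hS⟩
    have hyS : y ∈ S := hS.resolve_left haS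
    have hyA : y ∈ A := hSA _ hyS
    rcases hbip.2 with ⟨-, hyc⟩ | ⟨hac', -⟩
    · exact (Finset.mem_compl.mp hyc) hyA
    · exact (Finset.mem_compl.mp hac') ha
  have hnbrSne : ∀ a ∈ S, (H.neighborFinset a).Nonempty := by
    intro a ha
    rw [hnbrS a ha, neighborFinset_def]
    exact Set.toFinset_nonempty.mpr (hdeg a (hSA a ha))
  have hdegS : ∀ a ∈ S, 1 ≤ H.degree a := by
    intro a ha
    rw [SimpleGraph.degree]
    exact Finset.card_pos.mpr (hnbrSne a ha)
  have hEven : ∀ b, b ∉ A → 2 ∣ (H.neighborFinset b).card := by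
    intro b hb
    have hbc : b ∈ Aᶜ := Finset.mem_compl.mpr hb
    have h0 := congrFun hv ⟨b, hbc⟩
    simp only [Matrix.mulVecLin_apply, Matrix.mulVec, dotProduct, gammaAB,
      Pi.zero_apply] at h0
    have h2 : ∀ a : ↥A, (if G.Adj (a : V) b then (1 : ZMod 2) else 0) * v a
        = if (G.Adj (a : V) b ∧ (a : V) ∈ S) then 1 else 0 := by
      intro a
      have hz : v a = 0 ∨ v a = 1 := by
        have h01 : ∀ x : ZMod 2, x = 0 ∨ x = 1 := by decide
        exact h01 _
      by_cases hadj : G.Adj (a : V) b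
      · rcases hz with h | h
        · have hns : ¬((a : V) ∈ S) := by rw [hmemS]; simp [h]
          simp [hadj, h, hns]
        · have hs : (a : V) ∈ S := (hmemS a).mpr (by rw [h]; exact one_ne_zero)
          simp [hadj, h, hs]
      · simp [hadj]
    rw [Finset.sum_congr rfl (fun a _ => h2 a), Finset.sum_boole] at h0
    rw [ZMod.natCast_eq_zero_iff] at h0
    have h3 : (Finset.univ.filter (fun a : ↥A => G.Adj (a : V) b ∧ (a : V) ∈ S)).card
        = (H.neighborFinset b).card := by
      rw [hnbrB b hb]
      refine Finset.card_bij (fun a _ => (a : V)) ?_ ?_ ?_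
      · intro a ha
        rw [Finset.mem_filter] at ha ⊢
        exact ⟨ha.2.2, ha.2.1.symm⟩
      · intro a _ a' _ h
        exact Subtype.ext h
      · intro y hy
        rw [Finset.mem_filter] at hy
        exact ⟨⟨y, hSA y hy.1⟩, by rw [Finset.mem_filter]; exact ⟨Finset.mem_univ _, hy.2.symm, hy.1⟩, rfl⟩
    rwa [h3] at h0
  -- the support
  set T : Finset V := H.support.toFinset with hTdef
  have hST : S ⊆ T := by
    intro a ha
    rw [hTdef, Set.mem_toFinset, SimpleGraph.mem_support]
    obtain ⟨y, hy⟩ := hnbrSne a ha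
    exact ⟨y, (mem_neighborFinset _ _ _).mp hy⟩
  have hTdeg : ∀ x ∈ T \ S, 2 ≤ H.degree x := by
    intro x hx
    rw [Finset.mem_sdiff] at hx
    obtain ⟨hxT, hxS⟩ := hx
    rw [hTdef, Set.mem_toFinset, SimpleGraph.mem_support] at hxT
    obtain ⟨y, hy⟩ := hxT
    have hymem : y ∈ H.neighborFinset x := (mem_neighborFinset _ _ _).mpr hy
    have hxA : x ∉ A := by
      intro hxA
      rw [hnbrA0 x hxA hxS] at hymem
      exact Finset.notMem_empty y hymem
    have hdvd := hEven x hxA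
    have hpos : 0 < (H.neighborFinset x).card := Finset.card_pos.mpr ⟨y, hymem⟩
    rw [SimpleGraph.degree]
    omega
  -- leaf count
  set L : Finset V := S.filter (fun a => H.degree a = 1) with hLdef
  have hL : L.card ≤ 1 := by
    have hsub2 : (↑L : Set V) ⊆
        {a : V | a ∈ A ∧ ((bipartiteSub G A).neighborSet a).ncard = 1} := by
      intro a ha
      rw [Finset.mem_coe, hLdef, Finset.mem_filter] at ha
      obtain ⟨haS, hdeg1⟩ := ha
      refine ⟨hSA a haS, ?_⟩
      rw [Set.ncard_eq_toFinset_card']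
      have he2 : ((bipartiteSub G A).neighborSet a).toFinset = H.neighborFinset a := by
        rw [← neighborFinset_def, hnbrS a haS]
      rw [he2]
      rw [SimpleGraph.degree] at hdeg1
      exact hdeg1
    calc L.card = (↑L : Set V).ncard := (Set.ncard_coe_finset L).symm
    _ ≤ _ := Set.ncard_le_ncard hsub2 (Set.toFinite _)
    _ ≤ 1 := hleaf
  have hLS : L ⊆ S := Finset.filter_subset _ _
  -- sum bounds
  have hsplitL := Finset.sum_sdiff (f := fun x => H.degree x) hLS
  have hsum1 : (S \ L).card • 2 ≤ ∑ x ∈ S \ L, H.degree x := by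
    apply Finset.card_nsmul_le_sum
    intro a ha
    rw [Finset.mem_sdiff, hLdef, Finset.mem_filter] at ha
    have := hdegS a ha.1
    have hne1 : ¬(H.degree a = 1) := fun h => ha.2 ⟨ha.1, h⟩
    omega
  have hsum2 : L.card • 1 ≤ ∑ x ∈ L, H.degree x := by
    apply Finset.card_nsmul_le_sum
    intro a ha
    exact hdegS a (hLS ha)
  have hsum3 : (T \ S).card • 2 ≤ ∑ x ∈ T \ S, H.degree x :=
    Finset.card_nsmul_le_sum _ _ _ hTdeg
  have hsplitS := Finset.sum_sdiff (f := fun x => H.degree x) hST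
  beta_reduce at hsplitL hsplitS
  have hsumT : ∑ x ∈ T, H.degree x = ∑ x : V, H.degree x := by
    apply Finset.sum_subset (Finset.subset_univ T)
    intro x _ hx
    rw [SimpleGraph.degree, Finset.card_eq_zero]
    ext y
    rw [mem_neighborFinset]
    simp only [Finset.notMem_empty, iff_false]
    intro hy
    exact hx (by rw [hTdef, Set.mem_toFinset, SimpleGraph.mem_support]; exact ⟨y, hy⟩)
  have hdegsum : ∑ x : V, H.degree x = 2 * H.edgeFinset.card :=
    H.sum_degrees_eq_twice_card_edges
  -- edges nonempty and forest bound
  have ha0S : (a0 : V) ∈ S := (hmemS a0).mpr ha0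
  have hEne : H.edgeFinset.Nonempty := by
    obtain ⟨y, hy⟩ := hnbrSne _ ha0S
    rw [mem_neighborFinset] at hy
    exact ⟨s((a0 : V), y), mem_edgeFinset.mpr hy⟩
  have hforestbd := forest_bound H.edgeFinset.card H hHac hEne rfl
  rw [← hTdef] at hforestbd
  have hcardS : S.card ≤ T.card := Finset.card_le_card hST
  have hcardL : L.card ≤ S.card := Finset.card_le_card hLS
  have hcardTS : (T \ S).card = T.card - S.card := Finset.card_sdiff_of_subset hST
  have hcardSL : (S \ L).card = S.card - L.card := Finset.card_sdiff_of_subset hLS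
  simp only [smul_eq_mul, mul_one] at hsum1 hsum2 hsum3
  have hSne : 1 ≤ S.card := Finset.card_pos.mpr ⟨_, ha0S⟩
  omega

end Aux

/-- If `G_AB` is a forest, `|A| ≤ |B|`, `A` contains at most one leaf of `G_AB`,
and every vertex of `A` is non-isolated in `G_AB`, then `Γ_AB` has full column
rank `|A|` over `F₂`. -/
theorem gammaAB_full_column_rank {V : Type*} [Fintype V] [DecidableEq V]
    (G : SimpleGraph V) (A : Finset V)
    (hforest : (bipartiteSub G A).IsAcyclic)
    (hsize : A.card ≤ Aᶜ.card)
    (hleaf : {a : V | a ∈ A ∧ ((bipartiteSub G A).neighborSet a).ncard = 1}.ncard ≤ 1)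
    (hdeg : ∀ a ∈ A, ((bipartiteSub G A).neighborSet a).Nonempty) :
    (gammaAB G A).rank = A.card := by
  classical
  have hker : LinearMap.ker (gammaAB G A).mulVecLin = ⊥ :=
    LinearMap.ker_eq_bot'.mpr (fun m hm => kernel_trivial G A hforest hleaf hdeg m hm)
  have hrk := LinearMap.finrank_range_add_finrank_ker (gammaAB G A).mulVecLin
  rw [hker, finrank_bot] at hrk
  have hdom : Module.finrank (ZMod 2) (↥A → ZMod 2) = A.card := by
    rw [Module.finrank_pi]
    exact Fintype.card_coe A
  rw [Matrix.rank]
  omega
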